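/- The commutator of multiplication by x_i with Δ_j is given by [x_i, Δ_j] = (1 - δ_ij) P_ij - δ_ij Σ_{k≠i} P_ik, where x_i denotes the operator of multiplication by the i-th coordinate. -/
import Mathlib


open Finset

noncomputable section

/-- The open set of points with pairwise distinct coordinates. -/
def Omega (N : ℕ) : Set (Fin N → ℝ) := {x | Function.Injective x}

/-- The coordinate-swap (transposition) operator `P_{ij}`. -/
def Pswap {N : ℕ} (i j : Fin N) (f : (Fin N → ℝ) → ℝ) : (Fin N → ℝ) → ℝ :=
  fun x => f (x ∘ Equiv.swap i j)

/-- The difference operator `Δ_i = ∑_{j ≠ i} (x_i - x_j)⁻¹ (1 - P_{ij})`. -/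
def Delta {N : ℕ} (i : Fin N) (f : (Fin N → ℝ) → ℝ) : (Fin N → ℝ) → ℝ :=
  fun x => ∑ j ∈ Finset.univ.erase i, (f x - f (x ∘ Equiv.swap i j)) / (x i - x j)

/-- The partial derivative operator `∂_i`. -/
def pd {N : ℕ} (i : Fin N) (f : (Fin N → ℝ) → ℝ) : (Fin N → ℝ) → ℝ :=
  fun x => fderiv ℝ f x (Pi.single i 1)

/-- Multiplication by the `i`-th coordinate. -/
def xmul {N : ℕ} (i : Fin N) (f : (Fin N → ℝ) → ℝ) : (Fin N → ℝ) → ℝ :=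
  fun x => x i * f x

/-- The Dunkl operator `D_i = ∂_i + g Δ_i`. -/
def Dunkl {N : ℕ} (g : ℝ) (i : Fin N) (f : (Fin N → ℝ) → ℝ) : (Fin N → ℝ) → ℝ :=
  fun x => pd i f x + g * Delta i f x

theorem xmul_Delta_commutator {N : ℕ} (i j : Fin N)
    (f : (Fin N → ℝ) → ℝ) (x : Fin N → ℝ) (hx : x ∈ Omega N) :
    xmul i (Delta j f) x - Delta j (xmul i f) x =
      if i = j then -∑ k ∈ Finset.univ.erase i, Pswap i k f x
      else Pswap i j f x := by

  have hx' : ∀ a b : Fin N, a ≠ b → x a - x b ≠ 0 :=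
    fun a b h => sub_ne_zero.mpr (fun e => h (hx e))
  simp only [xmul, Delta, Pswap]
  rw [Finset.mul_sum, ← Finset.sum_sub_distrib]
  by_cases hij : i = j
  · subst hij
    rw [if_pos rfl, ← Finset.sum_neg_distrib]
    apply Finset.sum_congr rfl
    intro k hk
    have hk' : k ≠ i := Finset.ne_of_mem_erase hk
    have hne := hx' i k (Ne.symm hk')
    have : (x ∘ Equiv.swap i k) i = x k := by
      simp [Equiv.swap_apply_left]
    rw [this]
    field_simp
    ring
  · rw [if_neg hij]
    have hmem : i ∈ Finset.univ.erase j := Finset.mem_erase.mpr ⟨hij, Finset.mem_univ i⟩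
    rw [Finset.sum_eq_single_of_mem i hmem]
    · have h1 : (x ∘ Equiv.swap j i) i = x j := by simp [Equiv.swap_apply_right]
      have h2 : Equiv.swap j i = Equiv.swap i j := Equiv.swap_comm j i
      have hne := hx' j i (Ne.symm hij)
      rw [h1, h2]
      field_simp
      ring
    · intro k hk hki
      have hkj : k ≠ j := Finset.ne_of_mem_erase hk
      have : (x ∘ Equiv.swap j k) i = x i := by
        simp [Equiv.swap_apply_of_ne_of_ne hij (Ne.symm hki)]
      rw [this]
      ring
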